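/- Let (Ω, P) be a probability space, p ∈ (0,1), c > 0, H = 1/2, and let (ξ_i)_{i≥1} be a sequence of random variables taking values in {0,1} almost surely with P(ξ_i = 1) = p for all i and P(ξ_i = 1, ξ_j = 1) = p(p + c|i − j|^{2H−2}) = p(p + c/|i−j|) for all i ≠ j. Then Var(ξ_1 + ⋯ + ξ_N)/(N·ln N) → 2·p·c as N → ∞. -/

import Mathlib

open MeasureTheory ProbabilityTheory Filter

lemma gbp_sum_harmonic (N : ℕ) :
    ∑ j ∈ Finset.range N, harmonic j = N * harmonic N - N := by
  induction N with
  | zero => simp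
  | succ n ih =>
    rw [Finset.sum_range_succ, ih, harmonic_succ]
    push_cast
    field_simp
    ring

lemma gbp_row (N : ℕ) :
    ∑ j ∈ Finset.range N, (if N = j then (0:ℝ) else 1 / |(N : ℝ) - (j : ℝ)|)
      = (harmonic N : ℝ) := by
  have h1 : ∀ j ∈ Finset.range N, (if N = j then (0:ℝ) else 1/|(N:ℝ) - j|)
      = (fun k : ℕ => 1/((k:ℝ)+1)) (N - 1 - j) := by
    intro j hj
    rw [Finset.mem_range] at hj
    have hjN : (j:ℝ) < N := by exact_mod_cast hj
    have h2 : j ≤ N - 1 := by omega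
    have h3 : 1 ≤ N := by omega
    rw [if_neg (by omega), abs_of_pos (by linarith)]
    simp only
    congr 1
    rw [Nat.cast_sub h2, Nat.cast_sub h3, Nat.cast_one]
    ring
  rw [Finset.sum_congr rfl h1]
  beta_reduce
  rw [Finset.sum_range_reflect (fun k : ℕ => 1/((k:ℝ)+1)) N, harmonic]
  push_cast
  simp [one_div]

lemma gbp_T (N : ℕ) :
    ∑ i ∈ Finset.range N, ∑ j ∈ Finset.range N,
      (if i = j then (0:ℝ) else 1/|(i:ℝ) - (j:ℝ)|)
    = 2 * ∑ j ∈ Finset.range N, (harmonic j : ℝ) := by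
  induction N with
  | zero => simp
  | succ n ih =>
    have hsym : ∑ i ∈ Finset.range n, (if i = n then (0:ℝ) else 1/|(i:ℝ) - (n:ℝ)|)
        = ∑ j ∈ Finset.range n, (if n = j then (0:ℝ) else 1/|(n:ℝ) - (j:ℝ)|) := by
      refine Finset.sum_congr rfl fun i _ => ?_
      rw [abs_sub_comm]
      rcases eq_or_ne i n with h | h
      · simp [h]
      · rw [if_neg h, if_neg (Ne.symm h)]
    simp only [Finset.sum_range_succ, Finset.sum_add_distrib]
    rw [ih, hsym, gbp_row n]
    simp only [if_true]
    ring

lemma gbp_alg (N : ℕ) (p c : ℝ) :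
    ∑ i ∈ Finset.range N, ∑ j ∈ Finset.range N,
      (if i = j then p else p * (p + c / |(i:ℝ) - (j:ℝ)|))
    = N*p + ((N:ℝ)*N - N)*(p*p) + p*c*(2*((harmonic N : ℝ)*N - N)) := by
  have key : ∀ i ∈ Finset.range N,
      ∑ j ∈ Finset.range N, (if i = j then p else p * (p + c / |(i:ℝ) - j|))
      = (N:ℝ)*(p*p) + (p - p*p)
        + p*c*(∑ j ∈ Finset.range N, if i = j then (0:ℝ) else 1/|(i:ℝ) - j|) := by
    intro i hi
    have hterm : ∀ j ∈ Finset.range N, (if i = j then p else p*(p+c/|(i:ℝ) - j|))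
        = p*p + (if i = j then p - p*p else 0)
          + p*c*(if i = j then (0:ℝ) else 1/|(i:ℝ) - j|) := by
      intro j _
      by_cases h : i = j <;> simp [h] <;> ring
    rw [Finset.sum_congr rfl hterm, Finset.sum_add_distrib, Finset.sum_add_distrib,
      Finset.sum_const, Finset.card_range, Finset.sum_ite_eq, if_pos hi, ← Finset.mul_sum,
      nsmul_eq_mul]
  rw [Finset.sum_congr rfl key, Finset.sum_add_distrib, Finset.sum_add_distrib,
    Finset.sum_const, Finset.card_range, ← Finset.mul_sum, gbp_T N, nsmul_eq_mul,
    Finset.sum_const, Finset.card_range, nsmul_eq_mul]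
  have hc : (∑ j ∈ Finset.range N, (harmonic j : ℝ)) = N * (harmonic N : ℝ) - N := by
    exact_mod_cast congrArg (fun q : ℚ => (q : ℝ)) (gbp_sum_harmonic N)
  rw [hc]
  ring

/-- For a GBP with `p ∈ (0,1)`, `c > 0` and `H = 1/2` (so that the pairwise joint
probabilities are `p(p + c/|i−j|)`), the variance of `B_N = ξ_1 + ⋯ + ξ_N`
satisfies `Var(B_N)/(N·ln N) → 2·p·c` as `N → ∞`. -/
theorem gbp_variance_asymptotics_half {Ω : Type*} [MeasurableSpace Ω] (P : Measure Ω)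
    [IsProbabilityMeasure P] (p c : ℝ) (hp0 : 0 < p) (hp1 : p < 1) (hc : 0 < c)
    (ξ : ℕ → Ω → ℝ) (hm : ∀ i, Measurable (ξ i))
    (h01 : ∀ i, ∀ᵐ ω ∂P, ξ i ω = 0 ∨ ξ i ω = 1)
    (hP1 : ∀ i, P {ω | ξ i ω = 1} = ENNReal.ofReal p)
    (hP2 : ∀ i j, i ≠ j → P ({ω | ξ i ω = 1} ∩ {ω | ξ j ω = 1}) =
      ENNReal.ofReal (p * (p + c / |(i : ℝ) - (j : ℝ)|))) :
    Tendsto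
      (fun N : ℕ =>
        variance (fun ω => ∑ i ∈ Finset.range N, ξ i ω) P / ((N : ℝ) * Real.log N))
      atTop (nhds (2 * p * c)) := by
  have hA : ∀ i, MeasurableSet {ω | ξ i ω = 1} := fun i => hm i (measurableSet_singleton 1)
  have hind : ∀ i, ξ i =ᵐ[P] ({ω | ξ i ω = 1}).indicator (fun _ => (1:ℝ)) := by
    intro i
    filter_upwards [h01 i] with ω hω
    rcases hω with h | h
    · rw [Set.indicator_of_notMem, h]
      simp only [Set.mem_setOf_eq, h]
      norm_num
    · rw [Set.indicator_of_mem, h]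
      exact h
  have hprod : ∀ i j, (fun ω => ξ i ω * ξ j ω)
      =ᵐ[P] ({ω | ξ i ω = 1} ∩ {ω | ξ j ω = 1}).indicator (fun _ => (1:ℝ)) := by
    intro i j
    filter_upwards [h01 i, h01 j] with ω hi hj
    rcases hi with hi | hi
    · rw [Set.indicator_of_notMem, hi, zero_mul]
      intro hmem
      have := hmem.1
      simp only [Set.mem_setOf_eq, hi] at this
      norm_num at this
    · rcases hj with hj | hj
      · rw [Set.indicator_of_notMem, hj, mul_zero]
        intro hmem
        have := hmem.2
        simp only [Set.mem_setOf_eq, hj] at this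
        norm_num at this
      · have hmem : ω ∈ {ω | ξ i ω = 1} ∩ {ω | ξ j ω = 1} := ⟨hi, hj⟩
        rw [Set.indicator_of_mem hmem, hi, hj, mul_one]
  have hInt : ∀ i, Integrable (ξ i) P := fun i =>
    ((integrable_const (1:ℝ)).indicator (hA i)).congr (hind i).symm
  have hIntP : ∀ i j, Integrable (fun ω => ξ i ω * ξ j ω) P := fun i j =>
    ((integrable_const (1:ℝ)).indicator ((hA i).inter (hA j))).congr (hprod i j).symm
  have hEi : ∀ i, ∫ ω, ξ i ω ∂P = p := by
    intro i
    rw [integral_congr_ae (hind i), integral_indicator_const (1:ℝ) (hA i), measureReal_def, hP1 i,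
      ENNReal.toReal_ofReal hp0.le, smul_eq_mul, mul_one]
  have hEp : ∀ i j, ∫ ω, ξ i ω * ξ j ω ∂P
      = (if i = j then p else p * (p + c / |(i:ℝ) - j|)) := by
    intro i j
    by_cases h : i = j
    · subst h
      rw [if_pos rfl]
      have heq : (fun ω => ξ i ω * ξ i ω) =ᵐ[P] ξ i := by
        filter_upwards [h01 i] with ω hω
        rcases hω with h | h <;> rw [h] <;> ring
      rw [integral_congr_ae heq]
      exact hEi i
    · rw [if_neg h, integral_congr_ae (hprod i j),
        integral_indicator_const (1:ℝ) ((hA i).inter (hA j)), measureReal_def, hP2 i j h,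
        ENNReal.toReal_ofReal, smul_eq_mul, mul_one]
      have := div_nonneg hc.le (abs_nonneg ((i:ℝ) - j))
      nlinarith
  have hL2 : ∀ i, MemLp (ξ i) 2 P := by
    intro i
    refine MemLp.of_bound (hm i).aestronglyMeasurable 1 ?_
    filter_upwards [h01 i] with ω h
    rcases h with h | h <;> rw [h] <;> norm_num
  have hvar : ∀ N : ℕ, variance (fun ω => ∑ i ∈ Finset.range N, ξ i ω) P
      = N * (p * (1 - p)) + 2 * (p * c) * ((harmonic N : ℝ) * N - N) := by
    intro N
    rw [variance_eq_sub (memLp_finset_sum _ (fun i _ => hL2 i))]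
    have hX2 : (∫ ω, ((fun ω => ∑ i ∈ Finset.range N, ξ i ω) ^ 2) ω ∂P)
        = ∑ i ∈ Finset.range N, ∑ j ∈ Finset.range N, ∫ ω, ξ i ω * ξ j ω ∂P := by
      have hpt : ∀ ω, ((fun ω => ∑ i ∈ Finset.range N, ξ i ω) ^ 2) ω
          = ∑ i ∈ Finset.range N, ∑ j ∈ Finset.range N, ξ i ω * ξ j ω := by
        intro ω
        simp only [Pi.pow_apply]
        rw [sq, Finset.sum_mul_sum]
      rw [integral_congr_ae (Filter.Eventually.of_forall hpt),
        integral_finset_sum _ (fun i _ => integrable_finset_sum _ (fun j _ => hIntP i j))]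
      exact Finset.sum_congr rfl fun i _ => integral_finset_sum _ (fun j _ => hIntP i j)
    have hX1 : (∫ ω, (∑ i ∈ Finset.range N, ξ i ω) ∂P) = N * p := by
      rw [integral_finset_sum _ (fun i _ => hInt i)]
      simp only [hEi, Finset.sum_const, Finset.card_range, nsmul_eq_mul]
    rw [hX2, hX1]
    simp only [hEp]
    rw [gbp_alg N p c]
    ring
  -- limit computation
  have hlog0 : Tendsto (fun N : ℕ => (Real.log N)⁻¹) atTop (nhds 0) :=
    (Real.tendsto_log_atTop.comp tendsto_natCast_atTop_atTop).inv_tendsto_atTop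
  have hHlim : Tendsto (fun N : ℕ => ((harmonic N : ℝ) - Real.log N) * (Real.log N)⁻¹)
      atTop (nhds 0) := by
    have := Real.tendsto_harmonic_sub_log.mul hlog0
    simpa using this
  have hmain : Tendsto (fun N : ℕ => p*(1-p) * (Real.log N)⁻¹
      + 2*(p*c) * (((harmonic N : ℝ) - Real.log N) * (Real.log N)⁻¹ + 1)
      - 2*(p*c) * (Real.log N)⁻¹) atTop (nhds (2 * p * c)) := by
    have h2 : Tendsto (fun N : ℕ => p*(1-p) * (Real.log N)⁻¹
        + 2*(p*c) * (((harmonic N : ℝ) - Real.log N) * (Real.log N)⁻¹ + 1)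
        - 2*(p*c) * (Real.log N)⁻¹) atTop
        (nhds (p*(1-p)*0 + 2*(p*c)*(0+1) - 2*(p*c)*0)) :=
      ((tendsto_const_nhds.mul hlog0).add
        (tendsto_const_nhds.mul (hHlim.add tendsto_const_nhds))).sub
        (tendsto_const_nhds.mul hlog0)
    have : p*(1-p)*0 + 2*(p*c)*(0+1) - 2*(p*c)*0 = 2 * p * c := by ring
    rwa [this] at h2
  refine Tendsto.congr' ?_ hmain
  filter_upwards [eventually_ge_atTop 2] with N hN
  have hN1 : (1:ℝ) < N := by exact_mod_cast Nat.lt_of_lt_of_le one_lt_two hN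
  have hN0 : (N:ℝ) ≠ 0 := by linarith
  have hlogN : Real.log N ≠ 0 := (Real.log_pos hN1).ne'
  rw [hvar N]
  field_simp
  ring
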